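/- arXiv:2405.20809 — 2 statements merged into one kernel-verified Lean document; each statement's English description precedes it below -/
import Mathlib

section
/- Let G be a compact Lie group, n ≥ 2, and p : E → B a G-fibration such that E is G-contractible. Then cat_G(E^n_B) ≤ TC_{G,n}[p : E → B]. -/
open Set

noncomputable section

/-- Two maps `f g : X → Y` are `G`-homotopic on a subset `S ⊆ X`, with respect to the
actions `σX` on `X` and `σY` on `Y`. -/
def GHomotopicOn (G : Type*) {X Y : Type*} [TopologicalSpace X] [TopologicalSpace Y]
    (σX : G → X → X) (σY : G → Y → Y) (f g : X → Y) (S : Set X) : Prop :=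
  ∃ H : X × unitInterval → Y,
    ContinuousOn H (S ×ˢ (Set.univ : Set unitInterval)) ∧
    (∀ x ∈ S, H (x, 0) = f x) ∧
    (∀ x ∈ S, H (x, 1) = g x) ∧
    (∀ a : G, ∀ x ∈ S, ∀ t, H (σX a x, t) = σY a (H (x, t)))

/-- The equivariant sectional category `secat_G(p)` of a map `p : E → B`, with respect to
actions `σE` on `E` and `σB` on `B`: the least `k` such that `B` is covered by `k`
`G`-invariant open sets, each admitting a continuous equivariant homotopy section of `p`;
`⊤` if there is no such `k`. -/
def eqSecat (G : Type*) {E B : Type*} [TopologicalSpace E] [TopologicalSpace B]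
    (σE : G → E → E) (σB : G → B → B) (p : E → B) : ℕ∞ :=
  sInf {N : ℕ∞ | ∃ k : ℕ, N = (k : ℕ∞) ∧ ∃ U : Fin k → Set B,
    (∀ i, IsOpen (U i)) ∧
    (∀ i, ∀ a : G, ∀ b ∈ U i, σB a b ∈ U i) ∧
    (∀ b : B, ∃ i, b ∈ U i) ∧
    (∀ i, ∃ s : B → E, ContinuousOn s (U i) ∧
      (∀ a : G, ∀ b ∈ U i, s (σB a b) = σE a (s b)) ∧
      GHomotopicOn G σB σB (p ∘ s) id (U i))}

/-- A `G`-invariant open subset `U` of `X` is `G`-categorical if the inclusion `U ↪ X`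
is `G`-homotopic to a map taking values in a single orbit. -/
def GCategoricalSet (G : Type*) {X : Type*} [TopologicalSpace X]
    (σ : G → X → X) (U : Set X) : Prop :=
  IsOpen U ∧ (∀ a : G, ∀ x ∈ U, σ a x ∈ U) ∧
  ∃ x₀ : X, ∃ H : X × unitInterval → X,
    ContinuousOn H (U ×ˢ (Set.univ : Set unitInterval)) ∧
    (∀ x ∈ U, H (x, 0) = x) ∧
    (∀ x ∈ U, ∃ a : G, H (x, 1) = σ a x₀) ∧
    (∀ a : G, ∀ x ∈ U, ∀ t, H (σ a x, t) = σ a (H (x, t)))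

/-- The equivariant (Lusternik–Schnirelmann) category `cat_G(X)`: the least number of
`G`-categorical open sets covering `X`. -/
def eqCat (G : Type*) {X : Type*} [TopologicalSpace X] (σ : G → X → X) : ℕ∞ :=
  sInf {N : ℕ∞ | ∃ k : ℕ, N = (k : ℕ∞) ∧ ∃ U : Fin k → Set X,
    (∀ x : X, ∃ i, x ∈ U i) ∧ (∀ i, GCategoricalSet G σ (U i))}

/-- The time `i/(n-1)` in the unit interval, for `i : Fin n`. -/
def seqTime (n : ℕ) (i : Fin n) : unitInterval :=
  ⟨(i : ℝ) / ((n : ℝ) - 1), by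
    have h0 : 0 < n := i.pos
    have h1 : (0 : ℝ) ≤ (n : ℝ) - 1 := by
      have : (1 : ℝ) ≤ (n : ℝ) := by exact_mod_cast h0
      linarith
    refine ⟨div_nonneg (Nat.cast_nonneg _) h1, ?_⟩
    rcases eq_or_lt_of_le h1 with h | h
    · rw [← h, div_zero]; norm_num
    · rw [div_le_one h]
      have : ((i : ℕ) : ℝ) + 1 ≤ (n : ℝ) := by exact_mod_cast i.is_lt
      linarith⟩

/-- The generalized free path space fibration
`π_n : X^I → X^n`, `γ ↦ (γ(0), γ(1/(n-1)), …, γ(1))`. -/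
def piNMap (X : Type*) [TopologicalSpace X] (n : ℕ) :
    C(unitInterval, X) → (Fin n → X) :=
  fun γ i => γ (seqTime n i)

/-- The action induced on the free path space `X^I` by an action on `X`. -/
def pathAct {G X : Type*} [TopologicalSpace X] (σ : G → X → X)
    (hc : ∀ a : G, Continuous (σ a)) : G → C(unitInterval, X) → C(unitInterval, X) :=
  fun a γ => ⟨fun t => σ a (γ t), (hc a).comp γ.continuous⟩

/-- The diagonal action on `X^n` induced by an action on `X`. -/
def diagAct {G X : Type*} (σ : G → X → X) (n : ℕ) : G → (Fin n → X) → (Fin n → X) :=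
  fun a x i => σ a (x i)

/-- The sequential equivariant topological complexity `TC_{G,n}(X) := secat_G(π_n)`. -/
def eqTC (G : Type*) {X : Type*} [TopologicalSpace X] (σ : G → X → X)
    (hc : ∀ a : G, Continuous (σ a)) (n : ℕ) : ℕ∞ :=
  eqSecat G (pathAct σ hc) (diagAct σ n) (piNMap X n)

/-- The `n`-fold fibre product `E^n_B` of `p : E → B`. -/
def FibProd {E B : Type*} (p : E → B) (n : ℕ) : Type _ :=
  {x : Fin n → E // ∀ i j, p (x i) = p (x j)}

instance {E B : Type*} [TopologicalSpace E] (p : E → B) (n : ℕ) :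
    TopologicalSpace (FibProd p n) :=
  inferInstanceAs (TopologicalSpace {x : Fin n → E // ∀ i j, p (x i) = p (x j)})

/-- The space `E^I_B` of paths in `E` lying in a single fibre of `p : E → B`. -/
def ParPath {E B : Type*} [TopologicalSpace E] (p : E → B) : Type _ :=
  {γ : C(unitInterval, E) // ∀ s t : unitInterval, p (γ s) = p (γ t)}

instance {E B : Type*} [TopologicalSpace E] (p : E → B) :
    TopologicalSpace (ParPath p) :=
  inferInstanceAs (TopologicalSpace
    {γ : C(unitInterval, E) // ∀ s t : unitInterval, p (γ s) = p (γ t)})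

/-- The parametrized endpoint fibration `Π_n : E^I_B → E^n_B`. -/
def PiN {E B : Type*} [TopologicalSpace E] (p : E → B) (n : ℕ) :
    ParPath p → FibProd p n :=
  fun γ => ⟨fun i => γ.1 (seqTime n i), fun _ _ => γ.2 _ _⟩

/-- The action induced on `E^n_B` by a fibrewise-compatible action on `E`. -/
def fibProdAct {G E B : Type*} (σE : G → E → E) (p : E → B)
    (hp : ∀ a : G, ∀ e e' : E, p e = p e' → p (σE a e) = p (σE a e')) (n : ℕ) :
    G → FibProd p n → FibProd p n :=
  fun a x => ⟨fun i => σE a (x.1 i), fun i j => hp a _ _ (x.2 i j)⟩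

/-- The action induced on `E^I_B` by a fibrewise-compatible action on `E`. -/
def parPathAct {G E B : Type*} [TopologicalSpace E] (σE : G → E → E)
    (hc : ∀ a : G, Continuous (σE a)) (p : E → B)
    (hp : ∀ a : G, ∀ e e' : E, p e = p e' → p (σE a e) = p (σE a e')) :
    G → ParPath p → ParPath p :=
  fun a γ => ⟨⟨fun t => σE a (γ.1 t), (hc a).comp γ.1.continuous⟩,
    fun s t => hp a _ _ (γ.2 s t)⟩

/-- The sequential equivariant parametrized topological complexity
`TC_{G,n}[p : E → B] := secat_G(Π_n : E^I_B → E^n_B)`. -/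
def eqPTC (G : Type*) {E B : Type*} [TopologicalSpace E] (σE : G → E → E)
    (hc : ∀ a : G, Continuous (σE a)) (p : E → B)
    (hp : ∀ a : G, ∀ e e' : E, p e = p e' → p (σE a e) = p (σE a e')) (n : ℕ) : ℕ∞ :=
  eqSecat G (parPathAct σE hc p hp) (fibProdAct σE p hp n) (PiN p n)

/-- `σ` is a continuous action of the topological group `G` on `X`,
i.e. `X` is a `G`-space. -/
def IsGAction (G : Type*) [Group G] [TopologicalSpace G] {X : Type*} [TopologicalSpace X]
    (σ : G → X → X) : Prop :=
  (∀ x, σ 1 x = x) ∧ (∀ a b x, σ (a * b) x = σ a (σ b x)) ∧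
  Continuous (fun q : G × X => σ q.1 q.2)

/-- `p : E → B` is a `G`-fibration: a continuous equivariant map with the `G`-homotopy
lifting property with respect to all `G`-spaces. -/
def IsGFibration (G : Type*) [Group G] [TopologicalSpace G] {E : Type u} {B : Type v}
    [TopologicalSpace E] [TopologicalSpace B]
    (σE : G → E → E) (σB : G → B → B) (p : E → B) : Prop :=
  Continuous p ∧ (∀ a e, p (σE a e) = σB a (p e)) ∧
  ∀ (X : Type (max u v)) (_ : TopologicalSpace X) (σX : G → X → X), IsGAction G σX →
    ∀ (f : X → E) (h : X × unitInterval → B),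
      Continuous f → (∀ a x, f (σX a x) = σE a (f x)) →
      Continuous h → (∀ a x t, h (σX a x, t) = σB a (h (x, t))) →
      (∀ x, h (x, 0) = p (f x)) →
      ∃ hl : X × unitInterval → E, Continuous hl ∧
        (∀ a x t, hl (σX a x, t) = σE a (hl (x, t))) ∧
        (∀ x, hl (x, 0) = f x) ∧ (∀ x t, p (hl (x, t)) = h (x, t))

/-- A `G`-space is `G`-connected if all fixed point sets of closed subgroups
are path-connected. -/
def GConnected (G : Type*) [Group G] [TopologicalSpace G] {X : Type*} [TopologicalSpace X]
    (σ : G → X → X) : Prop :=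
  ∀ H : Subgroup G, IsClosed (H : Set G) →
    IsPathConnected {x : X | ∀ h ∈ H, σ h x = x}

/-- A `G`-space is `G`-contractible if its identity map is `G`-homotopic to a map
taking values in a single orbit. -/
def GContractible (G : Type*) {X : Type*} [TopologicalSpace X] (σ : G → X → X) : Prop :=
  ∃ x₀ : X, ∃ H : X × unitInterval → X, Continuous H ∧
    (∀ x, H (x, 0) = x) ∧
    (∀ x, ∃ a : G, H (x, 1) = σ a x₀) ∧
    (∀ a : G, ∀ x t, H (σ a x, t) = σ a (H (x, t)))

/-- Fibrewise `G`-homotopy between fibrewise maps `f g : E → E'` over `B`. -/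
def FibrewiseGHomotopic (G : Type*) {E E' B : Type*} [TopologicalSpace E]
    [TopologicalSpace E'] (σE : G → E → E) (σE' : G → E' → E')
    (p : E → B) (p' : E' → B) (f g : E → E') : Prop :=
  ∃ H : E × unitInterval → E', Continuous H ∧
    (∀ x, H (x, 0) = f x) ∧ (∀ x, H (x, 1) = g x) ∧
    (∀ a : G, ∀ x t, H (σE a x, t) = σE' a (H (x, t))) ∧
    (∀ x t, p' (H (x, t)) = p x)

end

noncomputable section AuxProof

/-- Projection of `ℝ` onto the unit interval. -/
def toI : ℝ → unitInterval := fun r => Set.projIcc 0 1 zero_le_one r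

lemma toI_cont : Continuous toI := by unfold toI; exact continuous_projIcc

lemma toI_coe (t : unitInterval) : toI (t : ℝ) = t := Set.projIcc_val zero_le_one t

lemma toI_zero : toI 0 = 0 := toI_coe 0

lemma toI_one : toI 1 = 1 := toI_coe 1

/-- The homotopy that first slides an `n`-tuple of points on a fibrewise path `γ`
back to `γ 0`, then contracts the diagonal using a contraction `HE` of the total space. -/
def slideContract {E B : Type*} [TopologicalSpace E] (p : E → B) (n : ℕ)
    (HE : E × unitInterval → E) :
    ParPath p × unitInterval → FibProd p n :=
  fun z =>
    if ((z.2 : ℝ) ≤ 1/2) then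
      ⟨fun i => z.1.1 (toI ((1 - 2*(z.2:ℝ)) * ((seqTime n i : unitInterval) : ℝ))),
        fun _ _ => z.1.2 _ _⟩
    else
      ⟨fun _ => HE (z.1.1 0, toI (2*(z.2:ℝ) - 1)), fun _ _ => rfl⟩

lemma slideContract_cont {E B : Type*} [TopologicalSpace E] (p : E → B) (n : ℕ)
    (HE : E × unitInterval → E) (hHE : Continuous HE)
    (hHE0 : ∀ e, HE (e, 0) = e) :
    Continuous (slideContract p n HE) := by
  have heval : Continuous fun q : C(unitInterval, E) × unitInterval => q.1 q.2 :=
    continuous_eval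
  have hγ : Continuous fun z : ParPath p × unitInterval => (z.1.1 : C(unitInterval, E)) :=
    continuous_subtype_val.comp continuous_fst
  have ht : Continuous fun z : ParPath p × unitInterval => (z.2 : ℝ) :=
    continuous_subtype_val.comp continuous_snd
  unfold slideContract
  apply Continuous.if_le
  · apply Continuous.subtype_mk
    apply continuous_pi; intro i
    exact heval.comp (hγ.prodMk (toI_cont.comp
      ((continuous_const.sub (continuous_const.mul ht)).mul continuous_const)))
  · apply Continuous.subtype_mk
    apply continuous_pi; intro _
    exact hHE.comp ((heval.comp (hγ.prodMk continuous_const)).prodMk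
      (toI_cont.comp ((continuous_const.mul ht).sub continuous_const)))
  · exact ht
  · exact continuous_const
  · intro z hz
    apply Subtype.ext
    funext i
    simp only [hz]
    have h1 : (1 - 2*(1/2 : ℝ)) * ((seqTime n i : unitInterval) : ℝ) = 0 := by ring
    have h2 : (2*(1/2 : ℝ) - 1) = 0 := by ring
    rw [h1, h2, toI_zero, hHE0]

lemma slideContract_zero {E B : Type*} [TopologicalSpace E] (p : E → B) (n : ℕ)
    (HE : E × unitInterval → E) (γ : ParPath p) :
    slideContract p n HE (γ, 0) = PiN p n γ := by
  apply Subtype.ext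
  funext i
  have hc : ((0 : unitInterval) : ℝ) = 0 := rfl
  rw [slideContract]; erw [if_pos (by rw [hc]; norm_num)]
  simp only [hc]
  have h1 : (1 - 2*(0:ℝ)) * ((seqTime n i : unitInterval) : ℝ)
      = ((seqTime n i : unitInterval) : ℝ) := by ring
  rw [h1, toI_coe]
  rfl

lemma slideContract_one {E B : Type*} [TopologicalSpace E] (p : E → B) (n : ℕ)
    (HE : E × unitInterval → E) (γ : ParPath p) :
    slideContract p n HE (γ, 1) = ⟨fun _ => HE (γ.1 0, 1), fun _ _ => rfl⟩ := by
  apply Subtype.ext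
  funext i
  have hc : ((1 : unitInterval) : ℝ) = 1 := rfl
  rw [slideContract]; erw [if_neg (by rw [hc]; norm_num)]
  simp only [hc]
  have h2 : (2*(1:ℝ) - 1) = 1 := by ring
  rw [h2, toI_one]

end AuxProof

theorem stmt_13 {G : Type*} [Group G] [TopologicalSpace G] [IsTopologicalGroup G]
    [CompactSpace G] {E B : Type*} [TopologicalSpace E] [TopologicalSpace B]
    [MulAction G E] [ContinuousSMul G E] [MulAction G B] [ContinuousSMul G B]
    (p : E → B)
    (hp : IsGFibration G (fun (a : G) (x : E) => a • x) (fun (a : G) (b : B) => a • b) p)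
    (n : ℕ) (hn : 2 ≤ n)
    (hcontr : GContractible G (fun (a : G) (x : E) => a • x)) :
    eqCat G (fibProdAct (fun (a : G) (x : E) => a • x) p
        (fun a x y h => by rw [hp.2.1, hp.2.1, h]) n) ≤
      eqPTC G (fun (a : G) (x : E) => a • x) (fun a => continuous_const_smul a) p
        (fun a x y h => by rw [hp.2.1, hp.2.1, h]) n := by
  have hpc : ∀ (a : G), ∀ (x y : E), p x = p y → p (a • x) = p (a • y) :=
    fun a x y h => by rw [hp.2.1, hp.2.1, h]
  classical
  rw [eqCat, eqPTC, eqSecat]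
  apply sInf_le_sInf
  rintro N ⟨k, rfl, U, hUo, hUinv, hUcov, hsec⟩
  refine ⟨k, rfl, U, hUcov, fun i => ?_⟩
  obtain ⟨s, hs_cont, hs_equiv, Hs, Hs_cont, Hs0, Hs1, Hs_eq⟩ := hsec i
  obtain ⟨x₀, HE, HE_cont, HE0, HE1, HE_eq⟩ := hcontr
  refine ⟨hUo i, hUinv i, ⟨fun _ => x₀, fun _ _ => rfl⟩, ?_⟩
  set L := slideContract p n HE with hL
  set H : FibProd p n × unitInterval → FibProd p n := fun z =>
    if ((z.2 : ℝ) ≤ 1/2) then Hs (z.1, toI (1 - 2*(z.2:ℝ)))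
    else L (s z.1, toI (2*(z.2:ℝ) - 1)) with hH
  refine ⟨H, ?_, ?_, ?_, ?_⟩
  · -- continuity on U i ×ˢ univ
    rw [continuousOn_iff_continuous_restrict]
    set S := (U i) ×ˢ (Set.univ : Set unitInterval) with hS
    have ht : Continuous fun z : ↥S => ((z : FibProd p n × unitInterval).2 : ℝ) :=
      continuous_subtype_val.comp (continuous_snd.comp continuous_subtype_val)
    have hx1 : Continuous fun z : ↥S => (z : FibProd p n × unitInterval).1 :=
      continuous_fst.comp continuous_subtype_val
    have hF : Continuous fun z : ↥S =>
        Hs ((z : FibProd p n × unitInterval).1,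
          toI (1 - 2*(((z : FibProd p n × unitInterval).2 : unitInterval) : ℝ))) := by
      apply Hs_cont.comp_continuous
      · exact hx1.prodMk (toI_cont.comp
          (continuous_const.sub (continuous_const.mul ht)))
      · intro z
        exact ⟨z.2.1, trivial⟩
    have hsx : Continuous fun z : ↥S => s (z : FibProd p n × unitInterval).1 := by
      apply hs_cont.comp_continuous hx1
      intro z; exact z.2.1
    have hG : Continuous fun z : ↥S =>
        L (s (z : FibProd p n × unitInterval).1,
          toI (2*(((z : FibProd p n × unitInterval).2 : unitInterval) : ℝ) - 1)) := by
      exact (slideContract_cont p n HE HE_cont HE0).comp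
        (hsx.prodMk (toI_cont.comp ((continuous_const.mul ht).sub continuous_const)))
    have : (S.domRestrict H) = fun z : ↥S =>
        if (((z : FibProd p n × unitInterval).2 : unitInterval) : ℝ) ≤ 1/2 then
          Hs ((z : FibProd p n × unitInterval).1,
            toI (1 - 2*(((z : FibProd p n × unitInterval).2 : unitInterval) : ℝ)))
        else L (s (z : FibProd p n × unitInterval).1,
          toI (2*(((z : FibProd p n × unitInterval).2 : unitInterval) : ℝ) - 1)) := rfl
    rw [this]
    apply Continuous.if_le hF hG ht continuous_const
    intro z hz
    rw [hz]
    have h1 : (1 - 2*(1/2 : ℝ)) = 0 := by ring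
    have h2 : (2*(1/2 : ℝ) - 1) = 0 := by ring
    rw [h1, h2, toI_zero, hL, slideContract_zero, Hs0 _ z.2.1]
    rfl
  · -- H (x, 0) = x
    intro x hx
    have hc : ((0 : unitInterval) : ℝ) = 0 := rfl
    rw [hH]
    simp only [hc]
    rw [if_pos (by norm_num)]
    have h1 : (1 - 2*(0:ℝ)) = 1 := by ring
    rw [h1, toI_one, Hs1 _ hx]
    rfl
  · -- H (x, 1) lands in the orbit of the constant tuple
    intro x hx
    have hc : ((1 : unitInterval) : ℝ) = 1 := rfl
    rw [hH]
    simp only [hc]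
    rw [if_neg (by norm_num)]
    have h2 : (2*(1:ℝ) - 1) = 1 := by ring
    rw [h2, toI_one, hL, slideContract_one]
    obtain ⟨a, ha⟩ := HE1 ((s x).1 0)
    refine ⟨a, ?_⟩
    apply Subtype.ext
    funext j
    exact ha
  · -- equivariance
    intro a x hx t
    rw [hH]
    simp only
    by_cases hle : ((t : unitInterval) : ℝ) ≤ 1/2
    · rw [if_pos hle, if_pos hle]
      exact Hs_eq a x hx _
    · rw [if_neg hle, if_neg hle]
      have hsa : s (fibProdAct (fun (a : G) (x : E) => a • x) p
          (fun a x y h => by rw [hp.2.1, hp.2.1, h]) n a x)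
          = parPathAct (fun (a : G) (x : E) => a • x) (fun a => continuous_const_smul a) p
            (fun a x y h => by rw [hp.2.1, hp.2.1, h]) a (s x) := hs_equiv a x hx
      rw [hsa, hL]
      set t' := toI (2*((t : unitInterval) : ℝ) - 1) with ht'
      -- equivariance of slideContract
      apply Subtype.ext
      funext j
      by_cases h2 : ((t' : unitInterval) : ℝ) ≤ 1/2
      · rw [slideContract, slideContract]
        erw [if_pos h2, if_pos h2]
        rfl
      · rw [slideContract, slideContract]
        erw [if_neg h2, if_neg h2]
        exact HE_eq a _ _
end

section
/- Let G be a compact Lie group, p : E → B a G-fibration, and let H and K be closed subgroups of G such that the fixed-point set E^H is K-invariant. Then the restriction p|_{E^H} : E^H → B^H is a K-map and, for every n ≥ 2, TC_{K,n}[p|_{E^H} : E^H → B^H] ≤ TC_{G,n}[p : E → B]. -/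
open Set

theorem stmt_15 {G : Type*} [Group G] [TopologicalSpace G] [IsTopologicalGroup G]
    [CompactSpace G] {E B : Type*} [TopologicalSpace E] [TopologicalSpace B]
    [MulAction G E] [ContinuousSMul G E] [MulAction G B] [ContinuousSMul G B]
    (p : E → B)
    (hp : IsGFibration G (fun (a : G) (x : E) => a • x) (fun (a : G) (b : B) => a • b) p)
    (H K : Subgroup G) (hHcl : IsClosed (H : Set G)) (hKcl : IsClosed (K : Set G))
    -- the fixed point set `E^H` is `K`-invariant:
    (hinv : ∀ k ∈ K, ∀ x : E, (∀ h ∈ H, h • x = x) → ∀ h ∈ H, h • (k • x) = k • x)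
    (n : ℕ) (hn : 2 ≤ n) :
    -- the restriction `p|_{E^H} : E^H → B^H` is a `K`-map:
    (∀ (k : ↥K) (x : {x : E // ∀ h ∈ H, h • x = x}),
      p ((k : G) • x.1) = (k : G) • p x.1) ∧
    eqPTC ↥K
        (fun (k : ↥K) (x : {x : E // ∀ h ∈ H, h • x = x}) =>
          (⟨(k : G) • x.1, hinv k.1 k.2 x.1 x.2⟩ : {x : E // ∀ h ∈ H, h • x = x}))
        (fun k => by fun_prop)
        (fun x : {x : E // ∀ h ∈ H, h • x = x} =>
          (⟨p x.1, fun h hh => by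
            have hpe : ∀ (g : G) (y : E), p (g • y) = g • p y := hp.2.1
            rw [← hpe, x.2 h hh]⟩ : {b : B // ∀ h ∈ H, h • b = b}))
        (fun k x y h =>
          Subtype.ext (show p ((k : G) • x.1) = p ((k : G) • y.1) by
            have hpe : ∀ (g : G) (y : E), p (g • y) = g • p y := hp.2.1
            have h' : p x.1 = p y.1 := congrArg Subtype.val h
            rw [hpe, hpe, h'])) n ≤
      eqPTC G (fun (a : G) (x : E) => a • x) (fun a => continuous_const_smul a) p
        (fun a x y h => by rw [hp.2.1, hp.2.1, h]) n := by
    classical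
  dsimp only [IsGFibration] at hp
  have hpe : ∀ (g : G) (y : E), p (g • y) = g • p y := hp.2.1
  refine ⟨fun k x => hpe k.1 x.1, ?_⟩
  -- abbreviations
  simp only [eqPTC, eqSecat]
  refine sInf_le_sInf fun N hN => ?_
  obtain ⟨k, rfl, U, hUo, hUi, hUc, hUs⟩ := hN
  -- the inclusion of fibre products
  set E' := {x : E // ∀ h ∈ H, h • x = x} with hE'def
  let p' : E' → {b : B // ∀ h ∈ H, h • b = b} := fun x =>
    ⟨p x.1, fun h hh => by rw [← hpe, x.2 h hh]⟩
  let σE' : ↥K → E' → E' := fun k x => ⟨(k : G) • x.1, hinv k.1 k.2 x.1 x.2⟩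
  let hpG : ∀ a : G, ∀ e e' : E, p e = p e' → p (a • e) = p (a • e') :=
    fun a e e' h => by rw [hpe, hpe, h]
  let jm : FibProd p' n → FibProd p n := fun x =>
    ⟨fun i => (x.1 i).1, fun i j => congrArg Subtype.val (x.2 i j)⟩
  have hjmc : Continuous jm :=
    Continuous.subtype_mk (continuous_pi fun i =>
      continuous_subtype_val.comp ((continuous_apply i).comp continuous_subtype_val)) _
  -- `jm x` is `H`-fixed
  have hfix : ∀ (x : FibProd p' n) (h : G), h ∈ H →
      fibProdAct (fun (a : G) (x : E) => a • x) p hpG n h (jm x) = jm x :=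
    fun x h hh => Subtype.ext (funext fun i => (x.1 i).2 h hh)
  -- `jm` is `K`-equivariant
  have hjmeq : ∀ (a : ↥K) (b : FibProd p' n),
      jm (fibProdAct σE' p' (fun k x y h => Subtype.ext (hpG k.1 x.1 y.1
        (congrArg Subtype.val h))) n a b)
        = fibProdAct (fun (a : G) (x : E) => a • x) p hpG n a.1 (jm b) :=
    fun a b => Subtype.ext (funext fun i => rfl)
  refine ⟨k, rfl, fun i => jm ⁻¹' U i, fun i => (hUo i).preimage hjmc, ?_, fun b => hUc (jm b), ?_⟩
  · intro i a b hb
    exact hUi i a.1 (jm b) hb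
  · intro i
    obtain ⟨s, hsc, hse, hgh⟩ := hUs i
    obtain ⟨Ht, hHtc, hHt0, hHt1, hHte⟩ := hgh
    -- the section takes H-fixed values on H-fixed points
    have hsfix : ∀ x : FibProd p' n, jm x ∈ U i → ∀ t : unitInterval, ∀ h ∈ H,
        h • (s (jm x)).1 t = (s (jm x)).1 t := by
      intro x hx t h hh
      have h1 : s (jm x) = parPathAct (fun (a : G) (x : E) => a • x)
          (fun a => continuous_const_smul a) p hpG h (s (jm x)) := by
        conv_lhs => rw [← hfix x h hh]
        exact hse h (jm x) hx
      exact (congrArg (fun γ : ParPath p => γ.1 t) h1).symm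
    have hHtfix : ∀ x : FibProd p' n, jm x ∈ U i → ∀ t : unitInterval, ∀ idx : Fin n,
        ∀ h ∈ H, h • (Ht (jm x, t)).1 idx = (Ht (jm x, t)).1 idx := by
      intro x hx t idx h hh
      have h1 : Ht (jm x, t)
          = fibProdAct (fun (a : G) (x : E) => a • x) p hpG n h (Ht (jm x, t)) := by
        conv_lhs => rw [← hfix x h hh]
        exact hHte h (jm x) hx t
      exact (congrArg (fun y : FibProd p n => y.1 idx) h1).symm
    -- the lifted section
    let s' : FibProd p' n → ParPath p' := fun x =>
      if hx : jm x ∈ U i then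
        ⟨⟨fun t => ⟨(s (jm x)).1 t, fun h hh => hsfix x hx t h hh⟩,
          Continuous.subtype_mk (map_continuous (s (jm x)).1) _⟩,
          fun a b => Subtype.ext ((s (jm x)).2 a b)⟩
      else ⟨⟨fun _ => x.1 ⟨0, by omega⟩, continuous_const⟩, fun _ _ => rfl⟩
    -- the lifted homotopy
    let Ht' : FibProd p' n × unitInterval → FibProd p' n := fun q =>
      if hq : jm q.1 ∈ U i then
        ⟨fun idx => ⟨(Ht (jm q.1, q.2)).1 idx, fun h hh => hHtfix q.1 hq q.2 idx h hh⟩,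
          fun aa bb => Subtype.ext ((Ht (jm q.1, q.2)).2 aa bb)⟩
      else q.1
    refine ⟨s', ?_, ?_, Ht', ?_, ?_, ?_, ?_⟩
    · -- continuity of s'
      rw [continuousOn_iff_continuous_restrict]
      have heq : (jm ⁻¹' U i).restrict s' = fun x : ↥(jm ⁻¹' U i) =>
          (⟨⟨fun t => ⟨(s (jm x.1)).1 t, fun h hh => hsfix x.1 x.2 t h hh⟩,
            Continuous.subtype_mk (map_continuous (s (jm x.1)).1) _⟩,
            fun a b => Subtype.ext ((s (jm x.1)).2 a b)⟩ : ParPath p') :=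
        funext fun x => dif_pos x.2
      change Continuous ((jm ⁻¹' U i).restrict s')
      rw [heq]
      have hs1 : Continuous fun x : ↥(jm ⁻¹' U i) => s (jm x.1) := by
        have hr := continuousOn_iff_continuous_restrict.mp hsc
        exact hr.comp (Continuous.subtype_mk (hjmc.comp continuous_subtype_val) fun x => x.2)
      have hs2 : Continuous fun x : ↥(jm ⁻¹' U i) => ((s (jm x.1)).1 : C(unitInterval, E)) :=
        continuous_subtype_val.comp hs1
      refine Continuous.subtype_mk ?_ _
      refine ContinuousMap.continuous_of_continuous_uncurry _ ?_
      refine Continuous.subtype_mk ?_ _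
      exact (hs2.comp continuous_fst).eval continuous_snd
    · -- equivariance of s'
      intro a b hb
      have h1 : jm (fibProdAct σE' p' (fun k x y h => Subtype.ext (hpG k.1 x.1 y.1
          (congrArg Subtype.val h))) n a b) ∈ U i := by
        rw [hjmeq]; exact hUi i a.1 (jm b) hb
      simp only [s']
      · refine Subtype.ext (ContinuousMap.ext fun t => Subtype.ext ?_)
        exact ((congrArg (fun γ : ParPath p' => (γ.1 t).1)
          (dif_pos h1 : s' (fibProdAct σE' p' (fun k x y h => Subtype.ext (hpG k.1 x.1 y.1
          (congrArg Subtype.val h))) n a b) = _)).trans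
          (congrArg (fun γ : ParPath p => γ.1 t) (hse a.1 (jm b) hb))).trans
          (congrArg (fun γ : ParPath p' => (a : G) • (γ.1 t).1)
            (dif_pos (show jm b ∈ U i from hb) : s' b = _)).symm
    · -- continuity of Ht'
      rw [continuousOn_iff_continuous_restrict]
      have heq : ((jm ⁻¹' U i) ×ˢ (Set.univ : Set unitInterval)).restrict Ht'
          = fun q : ↥((jm ⁻¹' U i) ×ˢ (Set.univ : Set unitInterval)) =>
            (⟨fun idx => ⟨(Ht (jm q.1.1, q.1.2)).1 idx,
                fun h hh => hHtfix q.1.1 q.2.1 q.1.2 idx h hh⟩,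
              fun aa bb => Subtype.ext ((Ht (jm q.1.1, q.1.2)).2 aa bb)⟩ : FibProd p' n) :=
        funext fun q => dif_pos q.2.1
      change Continuous (((jm ⁻¹' U i) ×ˢ (Set.univ : Set unitInterval)).restrict Ht')
      rw [heq]
      have hHt1c : Continuous fun q : ↥((jm ⁻¹' U i) ×ˢ (Set.univ : Set unitInterval)) =>
          Ht (jm q.1.1, q.1.2) := by
        have hr := continuousOn_iff_continuous_restrict.mp hHtc
        exact hr.comp (Continuous.subtype_mk
          ((hjmc.comp (continuous_fst.comp continuous_subtype_val)).prodMk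
            (continuous_snd.comp continuous_subtype_val)) fun q => ⟨q.2.1, trivial⟩)
      refine Continuous.subtype_mk (continuous_pi fun idx => Continuous.subtype_mk ?_ _) _
      exact (continuous_apply idx).comp (continuous_subtype_val.comp hHt1c)
    · -- Ht' at time 0
      intro x hx
      simp only [Ht', s', Function.comp]
      · refine Subtype.ext (funext fun idx => Subtype.ext ?_)
        exact ((congrArg (fun y : FibProd p' n => (y.1 idx).1)
          (dif_pos (show jm x ∈ U i from hx) : Ht' (x, 0) = _)).trans
          (congrArg (fun y : FibProd p n => y.1 idx) (hHt0 (jm x) hx))).trans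
          (congrArg (fun γ : ParPath p' => (γ.1 (seqTime n idx)).1)
            (dif_pos (show jm x ∈ U i from hx) : s' x = _)).symm
    · -- Ht' at time 1
      intro x hx
      simp only [Ht']
      · refine Subtype.ext (funext fun idx => Subtype.ext ?_)
        exact (congrArg (fun y : FibProd p' n => (y.1 idx).1)
          (dif_pos (show jm x ∈ U i from hx) : Ht' (x, 1) = _)).trans
          (congrArg (fun y : FibProd p n => y.1 idx) (hHt1 (jm x) hx))
    · -- equivariance of Ht'
      intro a x hx t
      have h1 : jm (fibProdAct σE' p' (fun k x y h => Subtype.ext (hpG k.1 x.1 y.1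
          (congrArg Subtype.val h))) n a x) ∈ U i := by
        rw [hjmeq]; exact hUi i a.1 (jm x) hx
      simp only [Ht']
      · refine Subtype.ext (funext fun idx => Subtype.ext ?_)
        exact ((congrArg (fun y : FibProd p' n => (y.1 idx).1)
          (dif_pos h1 : Ht' (fibProdAct σE' p' (fun k x y h => Subtype.ext (hpG k.1 x.1 y.1
          (congrArg Subtype.val h))) n a x, t) = _)).trans
          (congrArg (fun y : FibProd p n => y.1 idx) (hHte a.1 (jm x) hx t))).trans
          (congrArg (fun y : FibProd p' n => (a : G) • (y.1 idx).1)
            (dif_pos (show jm x ∈ U i from hx) : Ht' (x, t) = _)).symm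
end
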